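/- Let H be a real normed space. Suppose that for some nonempty finite index set A the identity ∑_{B ⊆ A} (−1)^{|A| − |B|} ‖x_B‖² = 0 holds for all choices of vectors x_i ∈ H, i ∈ A. Then the parallelogram law ‖x + y‖² + ‖x − y‖² = 2‖x‖² + 2‖y‖² holds for all x, y ∈ H, and hence the norm of H is induced by an inner product. -/

import Mathlib

open Finset

section Aux

variable {H : Type*} [NormedAddCommGroup H] [NormedSpace ℝ H]
variable {ι : Type*} [DecidableEq ι]

/-- Shifted alternating sum over the powerset. -/
noncomputable def Dw (s : Finset ι) (x : ι → H) (w : H) : ℝ :=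
  ∑ B ∈ s.powerset, (-1 : ℝ) ^ B.card * ‖(∑ i ∈ B, x i) + w‖ ^ 2

lemma Dw_empty (x : ι → H) (w : H) : Dw (∅ : Finset ι) x w = ‖w‖ ^ 2 := by
  simp [Dw]

lemma Dw_congr {s : Finset ι} {x x' : ι → H} (h : ∀ i ∈ s, x i = x' i) (w : H) :
    Dw s x w = Dw s x' w := by
  refine Finset.sum_congr rfl fun B hB => ?_
  rw [Finset.sum_congr rfl fun i hi => h i (Finset.mem_powerset.mp hB hi)]

lemma Dw_insert {s : Finset ι} {a : ι} (ha : a ∉ s) (x : ι → H) (w : H) :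
    Dw (insert a s) x w = Dw s x w - Dw s x (x a + w) := by
  unfold Dw
  rw [Finset.sum_powerset_insert ha]
  have key : ∀ B ∈ s.powerset, (-1 : ℝ) ^ (insert a B).card * ‖(∑ i ∈ insert a B, x i) + w‖ ^ 2
      = -((-1 : ℝ) ^ B.card * ‖(∑ i ∈ B, x i) + (x a + w)‖ ^ 2) := by
    intro B hB
    have haB : a ∉ B := fun hmem => ha (Finset.mem_powerset.mp hB hmem)
    rw [Finset.card_insert_of_notMem haB, Finset.sum_insert haB, pow_succ]
    rw [show x a + (∑ i ∈ B, x i) + w = (∑ i ∈ B, x i) + (x a + w) by abel]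
    ring
  rw [Finset.sum_congr rfl key]
  simp [sub_eq_add_neg]

lemma Dw_singleton (c : ι) (x : ι → H) (w : H) :
    Dw ({c} : Finset ι) x w = ‖w‖ ^ 2 - ‖x c + w‖ ^ 2 := by
  rw [show ({c} : Finset ι) = insert c ∅ from rfl,
    Dw_insert (Finset.notMem_empty c), Dw_empty, Dw_empty]

lemma Dw_constancy {A : Finset ι} (hyp : ∀ x : ι → H, Dw A x 0 = 0) {a : ι} (ha : a ∈ A) :
    ∀ (x : ι → H) (w : H), Dw (A.erase a) x w = Dw (A.erase a) x 0 := by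
  intro x w
  have has : a ∉ A.erase a := Finset.notMem_erase a A
  have h1 := hyp (Function.update x a w)
  rw [← Finset.insert_erase ha, Dw_insert has, Function.update_self, add_zero] at h1
  have e : ∀ u : H, Dw (A.erase a) (Function.update x a w) u = Dw (A.erase a) x u :=
    fun u => Dw_congr (fun i hi => Function.update_of_ne (Finset.ne_of_mem_erase hi) _ _) u
  rw [e, e] at h1
  linarith

lemma Dw_additivity {A : Finset ι} (hyp : ∀ x : ι → H, Dw A x 0 = 0) {a b : ι}
    (ha : a ∈ A) (hb : b ∈ A.erase a) (x : ι → H) (y z : H) :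
    Dw ((A.erase a).erase b) x (y + z) + Dw ((A.erase a).erase b) x 0
      = Dw ((A.erase a).erase b) x y + Dw ((A.erase a).erase b) x z := by
  have hbs' : b ∉ (A.erase a).erase b := Finset.notMem_erase b (A.erase a)
  have c := Dw_constancy hyp ha
  have key : ∀ v w : H, Dw ((A.erase a).erase b) x w - Dw ((A.erase a).erase b) x (v + w)
      = Dw ((A.erase a).erase b) x 0 - Dw ((A.erase a).erase b) x v := by
    intro v w
    have h1 := c (Function.update x b v) w
    rw [← Finset.insert_erase hb, Dw_insert hbs', Dw_insert hbs',
      Function.update_self, add_zero] at h1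
    have e : ∀ u : H, Dw ((A.erase a).erase b) (Function.update x b v) u
        = Dw ((A.erase a).erase b) x u :=
      fun u => Dw_congr (fun i hi => Function.update_of_ne (Finset.ne_of_mem_erase hi) _ _) u
    rw [e, e, e, e] at h1
    linarith
  have hk := key y z
  linarith

lemma Dw_descend {A : Finset ι} (hyp : ∀ x : ι → H, Dw A x 0 = 0) (h4 : 4 ≤ A.card)
    {a : ι} (ha : a ∈ A) : ∀ x : ι → H, Dw (A.erase a) x 0 = 0 := by
  set s := A.erase a with hs
  have hscard : 3 ≤ s.card := by rw [hs, Finset.card_erase_of_mem ha]; omega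
  have slot : ∀ b ∈ s, ∀ (x : ι → H) (y z : H),
      Dw s (Function.update x b (y + z)) 0
        = Dw s (Function.update x b y) 0 + Dw s (Function.update x b z) 0 := by
    intro b hb x y z
    have hbs' : b ∉ s.erase b := Finset.notMem_erase b s
    have expand : ∀ u : H,
        Dw s (Function.update x b u) 0 = Dw (s.erase b) x 0 - Dw (s.erase b) x u := by
      intro u
      nth_rewrite 1 [← Finset.insert_erase hb]
      rw [Dw_insert hbs', Function.update_self, add_zero]
      have e : ∀ w : H, Dw (s.erase b) (Function.update x b u) w = Dw (s.erase b) x w :=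
        fun w => Dw_congr (fun i hi => Function.update_of_ne (Finset.ne_of_mem_erase hi) _ _) w
      rw [e, e]
    rw [expand, expand, expand]
    have := Dw_additivity hyp ha hb x y z
    linarith
  have dbl : ∀ E : Finset ι, E ⊆ s → ∀ x : ι → H,
      Dw s (fun i => if i ∈ E then x i + x i else x i) 0 = 2 ^ E.card * Dw s x 0 := by
    intro E
    induction E using Finset.induction_on with
    | empty =>
      intro _ x
      simp only [Finset.notMem_empty, if_false, Finset.card_empty, pow_zero, one_mul]
    | insert _ _ ha'E =>
      rename_i a' E' ih
      intro hsub x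
      have ha's : a' ∈ s := hsub (Finset.mem_insert_self a' E')
      have hE's : E' ⊆ s := (Finset.subset_insert a' E').trans hsub
      set g : ι → H := fun i => if i ∈ E' then x i + x i else x i with hg
      have keyf : (fun i => if i ∈ insert a' E' then x i + x i else x i)
          = Function.update g a' (x a' + x a') := by
        funext i
        rcases eq_or_ne i a' with rfl | hi
        · simp [Function.update_self]
        · simp [Function.update_of_ne hi, hg, Finset.mem_insert, hi]
      rw [keyf, slot a' ha's g (x a') (x a')]
      have hgu : Function.update g a' (x a') = g := by
        have : g a' = x a' := by simp [hg, ha'E]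
        rw [← this, Function.update_eq_self]
      rw [hgu, ih hE's x, Finset.card_insert_of_notMem ha'E, pow_succ]
      ring
  intro x
  have h1 := dbl s (Finset.Subset.refl s) x
  have h2 : Dw s (fun i => if i ∈ s then x i + x i else x i) 0
      = Dw s (fun i => x i + x i) 0 := Dw_congr (fun i hi => by simp [hi]) 0
  have h3 : Dw s (fun i => x i + x i) 0 = 4 * Dw s x 0 := by
    unfold Dw
    rw [Finset.mul_sum]
    refine Finset.sum_congr rfl fun B hB => ?_
    rw [Finset.sum_add_distrib]
    have hnn : ‖(∑ i ∈ B, x i) + (∑ i ∈ B, x i) + 0‖ = 2 * ‖(∑ i ∈ B, x i) + 0‖ := by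
      rw [add_zero, add_zero, ← two_smul ℝ (∑ i ∈ B, x i), norm_smul]
      simp
    rw [hnn]
    ring
  have heq : (2 : ℝ) ^ s.card * Dw s x 0 = 4 * Dw s x 0 := by rw [← h1, h2, h3]
  have hfac : ((2 : ℝ) ^ s.card - 4) * Dw s x 0 = 0 := by linear_combination heq
  rcases mul_eq_zero.mp hfac with h0 | h0
  · exfalso
    have hpow : (8 : ℝ) ≤ 2 ^ s.card := by
      calc (8 : ℝ) = 2 ^ 3 := by norm_num
      _ ≤ 2 ^ s.card := by exact pow_le_pow_right₀ (by norm_num) hscard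
    linarith
  · exact h0

lemma par_case1 {A : Finset ι} (hyp : ∀ x : ι → H, Dw A x 0 = 0) (h1 : A.card = 1) :
    ∀ u v : H, ‖u + v‖ ^ 2 + ‖u - v‖ ^ 2 = 2 * ‖u‖ ^ 2 + 2 * ‖v‖ ^ 2 := by
  obtain ⟨c, rfl⟩ := Finset.card_eq_one.mp h1
  have hzero : ∀ v : H, ‖v‖ = 0 := by
    intro v
    have := hyp (fun _ => v)
    rw [Dw_singleton] at this
    simp at this
    simp [this]
  intro u v
  rw [hzero (u + v), hzero (u - v), hzero u, hzero v]
  norm_num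

lemma par_case2 {A : Finset ι} (hyp : ∀ x : ι → H, Dw A x 0 = 0) (h2 : A.card = 2) :
    ∀ u v : H, ‖u + v‖ ^ 2 + ‖u - v‖ ^ 2 = 2 * ‖u‖ ^ 2 + 2 * ‖v‖ ^ 2 := by
  have hne : A.Nonempty := Finset.card_pos.mp (by omega)
  obtain ⟨a, ha⟩ := hne
  obtain ⟨c, hc⟩ := Finset.card_eq_one.mp
    (by rw [Finset.card_erase_of_mem ha, h2] : (A.erase a).card = 1)
  have pyth : ∀ u v : H, ‖u + v‖ ^ 2 = ‖u‖ ^ 2 + ‖v‖ ^ 2 := by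
    intro u v
    have hconst := Dw_constancy hyp ha (fun _ => u) v
    rw [hc, Dw_singleton, Dw_singleton] at hconst
    simp only [add_zero, norm_zero] at hconst
    nlinarith [hconst]
  intro u v
  have hp1 := pyth u v
  have hp2 := pyth u (-v)
  rw [norm_neg] at hp2
  rw [sub_eq_add_neg]
  linarith

lemma par_case3 {A : Finset ι} (hyp : ∀ x : ι → H, Dw A x 0 = 0) (h3 : A.card = 3) :
    ∀ u v : H, ‖u + v‖ ^ 2 + ‖u - v‖ ^ 2 = 2 * ‖u‖ ^ 2 + 2 * ‖v‖ ^ 2 := by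
  have hne : A.Nonempty := Finset.card_pos.mp (by omega)
  obtain ⟨a, ha⟩ := hne
  have hbne : (A.erase a).Nonempty := Finset.card_pos.mp
    (by rw [Finset.card_erase_of_mem ha]; omega)
  obtain ⟨b, hb⟩ := hbne
  obtain ⟨c, hc⟩ := Finset.card_eq_one.mp
    (by rw [Finset.card_erase_of_mem hb, Finset.card_erase_of_mem ha, h3] :
      ((A.erase a).erase b).card = 1)
  intro u v
  have hadd := Dw_additivity hyp ha hb (fun _ => u) v (-v)
  rw [hc, Dw_singleton, Dw_singleton, Dw_singleton, Dw_singleton] at hadd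
  simp only [add_neg_cancel, add_zero, norm_zero, norm_neg] at hadd
  rw [sub_eq_add_neg]
  nlinarith [hadd]

lemma par_of_hyp : ∀ (n : ℕ) (A : Finset ι), A.card ≤ n → A.Nonempty →
    (∀ x : ι → H, Dw A x 0 = 0) →
    ∀ u v : H, ‖u + v‖ ^ 2 + ‖u - v‖ ^ 2 = 2 * ‖u‖ ^ 2 + 2 * ‖v‖ ^ 2 := by
  intro n
  induction n with
  | zero =>
    intro A hc hne _
    exact absurd (Finset.card_eq_zero.mp (Nat.le_zero.mp hc)) hne.ne_empty
  | succ n ih =>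
    intro A hc hne hyp
    rcases lt_or_ge A.card 4 with h4 | h4
    · have h1 : 1 ≤ A.card := Finset.card_pos.mpr hne
      have : A.card = 1 ∨ A.card = 2 ∨ A.card = 3 := by omega
      rcases this with h | h | h
      · exact par_case1 hyp h
      · exact par_case2 hyp h
      · exact par_case3 hyp h
    · obtain ⟨a, ha⟩ := hne
      have hne' : (A.erase a).Nonempty := Finset.card_pos.mp
        (by rw [Finset.card_erase_of_mem ha]; omega)
      exact ih (A.erase a) (by rw [Finset.card_erase_of_mem ha]; omega) hne'
        (Dw_descend hyp h4 ha)

end Aux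

theorem stmt10 {H : Type*} [NormedAddCommGroup H] [NormedSpace ℝ H]
    {ι : Type*} [DecidableEq ι] (A : Finset ι) (hA : A.Nonempty)
    (h : ∀ x : ι → H,
      ∑ B ∈ A.powerset, (-1 : ℝ) ^ (A.card - B.card) * ‖∑ i ∈ B, x i‖ ^ 2 = 0) :
    ∀ x y : H, ‖x + y‖ ^ 2 + ‖x - y‖ ^ 2 = 2 * ‖x‖ ^ 2 + 2 * ‖y‖ ^ 2 := by
  have hyp : ∀ x : ι → H, Dw A x 0 = 0 := by
    intro x
    have hx := h x
    have key : ∑ B ∈ A.powerset, (-1 : ℝ) ^ (A.card - B.card) * ‖∑ i ∈ B, x i‖ ^ 2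
        = (-1 : ℝ) ^ A.card * Dw A x 0 := by
      unfold Dw
      rw [Finset.mul_sum]
      refine Finset.sum_congr rfl fun B hB => ?_
      have hk : B.card ≤ A.card := Finset.card_le_card (Finset.mem_powerset.mp hB)
      rw [add_zero]
      have ha1 : (-1 : ℝ) ^ (A.card - B.card) * (-1 : ℝ) ^ B.card = (-1 : ℝ) ^ A.card := by
        rw [← pow_add, Nat.sub_add_cancel hk]
      have ha2 : (-1 : ℝ) ^ B.card * (-1 : ℝ) ^ B.card = 1 := by
        rw [← mul_pow]; norm_num
      linear_combination (((-1 : ℝ) ^ B.card) * ‖∑ i ∈ B, x i‖ ^ 2) * ha1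
        - (((-1 : ℝ) ^ (A.card - B.card)) * ‖∑ i ∈ B, x i‖ ^ 2) * ha2
    rw [key] at hx
    rcases mul_eq_zero.mp hx with h0 | h0
    · exact absurd h0 (pow_ne_zero _ (by norm_num))
    · exact h0
  exact par_of_hyp A.card A le_rfl hA hyp
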